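/- Let α be irrational with convergents p_n/q_n and z_n = q_nα − p_n, let n be even, and on ℝ/ℤ set I_n^0 = [0, |z_{n+1}|). Then for every x ∈ I_n^0, the first forward return time min{j ∈ ℤ₊ : x + jα (mod 1) ∈ I_n^0} equals either q_{n+2} or q_{n+2} + q_{n+1}. -/

import Mathlib

/-- Gauss map iterates of `α`: `x₀ = {α}`, `x_{n+1} = {1/x_n}`. -/
noncomputable def gaussIter (α : ℝ) : ℕ → ℝ
  | 0 => Int.fract α
  | n + 1 => Int.fract (gaussIter α n)⁻¹

/-- `cfa α n` is the partial quotient `a_{n+1} = ⌊1/x_n⌋` of the continued fraction of `α`. -/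
noncomputable def cfa (α : ℝ) (n : ℕ) : ℕ := ⌊(gaussIter α n)⁻¹⌋₊

/-- Denominators `q_n` of the continued fraction convergents of `α`:
`q₀ = 1`, `q₁ = a₁`, `q_{n+2} = a_{n+2} q_{n+1} + q_n`. -/
noncomputable def cfq (α : ℝ) : ℕ → ℕ
  | 0 => 1
  | 1 => cfa α 0
  | n + 2 => cfa α (n + 1) * cfq α (n + 1) + cfq α n

/-- Numerators `p_n` of the continued fraction convergents of `α`:
`p₀ = ⌊α⌋`, `p₁ = a₁⌊α⌋ + 1`, `p_{n+2} = a_{n+2} p_{n+1} + p_n`. -/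
noncomputable def cfp (α : ℝ) : ℕ → ℤ
  | 0 => ⌊α⌋
  | 1 => cfa α 0 * ⌊α⌋ + 1
  | n + 2 => cfa α (n + 1) * cfp α (n + 1) + cfp α n

/-- `z_n = q_n α - p_n`. -/
noncomputable def cfz (α : ℝ) (n : ℕ) : ℝ := (cfq α n : ℝ) * α - (cfp α n : ℝ)

/-- The arc `[c, d) (mod 1)` on the circle `ℝ/ℤ`. -/
noncomputable def arc (c d : ℝ) : Set (AddCircle (1 : ℝ)) :=
  (fun t : ℝ => (t : AddCircle (1 : ℝ))) '' Set.Ico c d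

section Aux
variable {α : ℝ}

lemma fract_basic {y : ℝ} (h : Irrational y) :
    Irrational (Int.fract y) ∧ 0 < Int.fract y ∧ Int.fract y < 1 := by
  have hirr : Irrational (Int.fract y) := by
    rw [Int.fract]; exact h.sub_intCast ⌊y⌋
  refine ⟨hirr, ?_, Int.fract_lt_one y⟩
  rcases (Int.fract_nonneg y).lt_or_eq with h0 | h0
  · exact h0
  · exact absurd (h0 ▸ hirr) not_irrational_zero

lemma gauss_basic (hα : Irrational α) : ∀ n, Irrational (gaussIter α n) ∧ 0 < gaussIter α n ∧ gaussIter α n < 1 := by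
  intro n
  induction n with
  | zero => exact fract_basic hα
  | succ k ih => exact fract_basic ih.1.inv

lemma gauss_pos (hα : Irrational α) (n : ℕ) : 0 < gaussIter α n := (gauss_basic hα n).2.1
lemma gauss_lt_one (hα : Irrational α) (n : ℕ) : gaussIter α n < 1 := (gauss_basic hα n).2.2

lemma cfa_pos (hα : Irrational α) (n : ℕ) : 1 ≤ cfa α n := by
  have h1 : (1:ℝ) < (gaussIter α n)⁻¹ :=
    (one_lt_inv₀ (gauss_pos hα n)).2 (gauss_lt_one hα n)
  exact Nat.le_floor (by exact_mod_cast h1.le)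

lemma cfa_eq (hα : Irrational α) (n : ℕ) :
    (cfa α n : ℝ) = (gaussIter α n)⁻¹ - gaussIter α (n + 1) := by
  have h0 : (0:ℝ) ≤ (gaussIter α n)⁻¹ := (inv_pos.2 (gauss_pos hα n)).le
  have : ((cfa α n : ℤ) : ℝ) = (⌊(gaussIter α n)⁻¹⌋ : ℝ) := by
    rw [show ((cfa α n : ℤ)) = ⌊(gaussIter α n)⁻¹⌋ from Int.natCast_floor_eq_floor h0]
  push_cast at this
  rw [this, show gaussIter α (n+1) = Int.fract (gaussIter α n)⁻¹ from rfl, Int.fract]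
  ring

/-- `P n = x₀ x₁ ⋯ x_n`. -/
noncomputable def cfP (α : ℝ) (n : ℕ) : ℝ := ∏ i ∈ Finset.range (n + 1), gaussIter α i

lemma cfP_succ (n : ℕ) : cfP α (n + 1) = cfP α n * gaussIter α (n + 1) :=
  Finset.prod_range_succ _ _

lemma cfP_pos (hα : Irrational α) (n : ℕ) : 0 < cfP α n :=
  Finset.prod_pos fun i _ => gauss_pos hα i

lemma cfP_lt_one (hα : Irrational α) : ∀ n, cfP α n < 1 := by
  intro n
  induction n with
  | zero => simpa [cfP] using gauss_lt_one hα 0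
  | succ k ih =>
      rw [cfP_succ]
      have h1 := gauss_pos hα (k+1)
      have h2 := gauss_lt_one hα (k+1)
      have h3 := cfP_pos hα k
      nlinarith

lemma cfz_formula (hα : Irrational α) : ∀ n, cfz α n = (-1 : ℝ) ^ n * cfP α n := by
  intro n
  induction n using Nat.twoStepInduction with
  | zero =>
      have hg0 : gaussIter α 0 = α - ⌊α⌋ := rfl
      simp only [cfz, cfq, cfp, cfP, pow_zero, one_mul, Nat.cast_one]
      rw [Finset.prod_range_one, hg0]
  | one =>
      have h := cfa_eq hα 0
      have hx0 : gaussIter α 0 ≠ 0 := (gauss_pos hα 0).ne'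
      have hg0 : gaussIter α 0 = α - ⌊α⌋ := rfl
      have key : (cfa α 0 : ℝ) * gaussIter α 0 = 1 - gaussIter α 0 * gaussIter α 1 := by
        rw [h]; field_simp
      simp only [cfz, cfq, cfp, cfP, pow_one, Finset.prod_range_succ,
        Finset.prod_range_one]
      push_cast
      linear_combination key - (cfa α 0 : ℝ) * hg0
  | more k ihk ihk1 =>
      have hrec : cfz α (k + 2) = (cfa α (k+1) : ℝ) * cfz α (k+1) + cfz α k := by
        simp only [cfz, cfq, cfp]
        push_cast
        ring
      have h := cfa_eq hα (k+1)
      have hx : gaussIter α (k+1) ≠ 0 := (gauss_pos hα (k+1)).ne'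
      have hkey : (cfa α (k+1) : ℝ) * gaussIter α (k+1)
          = 1 - gaussIter α (k+1) * gaussIter α (k+2) := by
        rw [h]; field_simp
      rw [hrec, ihk, ihk1]
      simp only [cfP_succ]
      have hpow : (-1:ℝ) ^ (k+2) = (-1:ℝ)^k := by ring
      have hpow1 : (-1:ℝ) ^ (k+1) = -(-1:ℝ)^k := by ring
      rw [hpow, hpow1]
      linear_combination (-(-1:ℝ)^k * cfP α k) * hkey

lemma cf_det : ∀ n, cfp α (n+1) * (cfq α n : ℤ) - cfp α n * (cfq α (n+1) : ℤ) = (-1) ^ n := by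
  intro n
  induction n with
  | zero => simp [cfp, cfq]; ring
  | succ k ih =>
      have hq : (cfq α (k+2) : ℤ) = (cfa α (k+1) : ℤ) * (cfq α (k+1) : ℤ) + (cfq α k : ℤ) := by
        simp [cfq]
      have hp : cfp α (k+2) = (cfa α (k+1) : ℤ) * cfp α (k+1) + cfp α k := rfl
      rw [hp, hq]
      have : (cfa α (k+1) : ℤ) * cfp α (k+1) * (cfq α (k+1) : ℤ) + cfp α k * (cfq α (k+1) : ℤ)
          - cfp α (k+1) * ((cfa α (k+1) : ℤ) * (cfq α (k+1) : ℤ) + (cfq α k : ℤ))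
          = -(cfp α (k+1) * (cfq α k : ℤ) - cfp α k * (cfq α (k+1) : ℤ)) := by ring
      rw [show ((cfa α (k+1) : ℤ) * cfp α (k+1) + cfp α k) * (cfq α (k+1) : ℤ)
          = (cfa α (k+1) : ℤ) * cfp α (k+1) * (cfq α (k+1) : ℤ) + cfp α k * (cfq α (k+1) : ℤ) by ring]
      rw [this, ih]
      ring

lemma cfq_pos (hα : Irrational α) : ∀ n, 1 ≤ cfq α n := by
  intro n
  induction n using Nat.twoStepInduction with
  | zero => simp [cfq]
  | one => simpa [cfq] using cfa_pos hα 0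
  | more k ih1 ih0 =>
      have : cfq α (k+2) = cfa α (k+1) * cfq α (k+1) + cfq α k := rfl
      omega

lemma abs_le_abs_add_of_mul_nonneg {u v : ℝ} (h : 0 ≤ u * v) : |u| ≤ |u + v| := by
  rcases abs_cases u with ⟨h1, h2⟩ | ⟨h1, h2⟩ <;>
    rcases abs_cases (u + v) with ⟨h3, h4⟩ | ⟨h3, h4⟩ <;> nlinarith

lemma best_approx (hα : Irrational α) (n : ℕ) (j : ℕ) (hj0 : 0 < j) (hj : j < cfq α (n+1)) (m : ℤ) :
    |cfz α n| ≤ |(j : ℝ) * α - m| := by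
  have hdet := cf_det (α := α) n
  have hε2 : ((-1:ℤ)^n) * ((-1:ℤ)^n) = 1 := by
    rw [← pow_add]; exact Even.neg_one_pow ⟨n, by ring⟩
  set a : ℤ := (-1)^n * (cfp α (n+1) * j - (cfq α (n+1) : ℤ) * m) with ha_def
  set b : ℤ := (-1)^n * ((cfq α n : ℤ) * m - cfp α n * j) with hb_def
  have ha : a * (cfq α n : ℤ) + b * (cfq α (n+1) : ℤ) = j := by
    rw [ha_def, hb_def]
    linear_combination ((-1:ℤ)^n * j) * hdet + (j : ℤ) * hε2
  have hb : a * cfp α n + b * cfp α (n+1) = m := by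
    rw [ha_def, hb_def]
    linear_combination ((-1:ℤ)^n * m) * hdet + m * hε2
  have ha' : (a:ℝ) * (cfq α n : ℝ) + (b:ℝ) * (cfq α (n+1) : ℝ) = (j:ℝ) := by
    exact_mod_cast congrArg (fun z : ℤ => (z:ℝ)) ha
  have hb' : (a:ℝ) * (cfp α n : ℝ) + (b:ℝ) * (cfp α (n+1) : ℝ) = (m:ℝ) := by
    exact_mod_cast congrArg (fun z : ℤ => (z:ℝ)) hb
  have key : (j:ℝ) * α - m = (a:ℝ) * cfz α n + (b:ℝ) * cfz α (n+1) := by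
    simp only [cfz]
    linear_combination (-α) * ha' + hb'
  have hq1 : (1:ℤ) ≤ (cfq α n : ℤ) := by exact_mod_cast cfq_pos hα n
  have hq2 : (1:ℤ) ≤ (cfq α (n+1) : ℤ) := by exact_mod_cast cfq_pos hα (n+1)
  have hjq : (j:ℤ) < (cfq α (n+1):ℤ) := by exact_mod_cast hj
  have hj0' : (0:ℤ) < (j:ℤ) := by exact_mod_cast hj0
  rcases eq_or_ne b 0 with hb0 | hb0
  · have haq : a * (cfq α n : ℤ) = j := by
      have := ha; rw [hb0] at this; simpa using this
    have ha1 : 1 ≤ a := by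
      by_contra h'
      push_neg at h'
      have h'' : a ≤ 0 := by omega
      nlinarith
    have h1 : (1:ℝ) ≤ |(a:ℝ)| := by
      have : (1:ℝ) ≤ ((|a| : ℤ) : ℝ) := by exact_mod_cast Int.one_le_abs (by omega)
      rwa [Int.cast_abs] at this
    rw [key, hb0]
    push_cast
    rw [zero_mul, add_zero, abs_mul]
    nlinarith [abs_nonneg (cfz α n)]
  · have ha0 : a ≠ 0 := by
      intro hA
      rw [hA] at ha
      simp at ha
      have hB : 0 < b := by nlinarith
      nlinarith [le_mul_of_one_le_left (le_of_lt (by linarith : (0:ℤ) < (cfq α (n+1):ℤ))) (by omega : 1 ≤ b)]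
    have hab : a * b < 0 := by
      by_contra hcon
      push_neg at hcon
      rcases lt_trichotomy a 0 with hA | hA | hA
      · have hB : b ≤ 0 := by nlinarith
        have hB' : b < 0 := lt_of_le_of_ne hB hb0
        have h1 : a * (cfq α n:ℤ) < 0 := mul_neg_of_neg_of_pos hA (by linarith)
        have h2 : b * (cfq α (n+1):ℤ) < 0 := mul_neg_of_neg_of_pos hB' (by linarith)
        linarith
      · exact ha0 hA
      · have hB : 0 ≤ b := by nlinarith
        have hB' : 0 < b := hB.lt_of_ne (Ne.symm hb0)
        have h1 : (cfq α n:ℤ) ≤ a * (cfq α n:ℤ) :=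
          le_mul_of_one_le_left (by linarith) (by omega)
        have h2 : (cfq α (n+1):ℤ) ≤ b * (cfq α (n+1):ℤ) :=
          le_mul_of_one_le_left (by linarith) (by omega)
        linarith
    have hzz : cfz α n * cfz α (n+1) < 0 := by
      rw [cfz_formula hα n, cfz_formula hα (n+1)]
      have hP1 := cfP_pos hα n
      have hP2 := cfP_pos hα (n+1)
      have hs : (-1:ℝ)^n * (-1:ℝ)^(n+1) = -1 := by
        rw [← pow_add]; exact Odd.neg_one_pow ⟨n, by ring⟩
      have hre : (-1:ℝ)^n * cfP α n * ((-1:ℝ)^(n+1) * cfP α (n+1))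
          = ((-1:ℝ)^n * (-1:ℝ)^(n+1)) * (cfP α n * cfP α (n+1)) := by ring
      rw [hre, hs]
      nlinarith [mul_pos hP1 hP2]
    have habs : 0 ≤ ((a:ℝ) * cfz α n) * ((b:ℝ) * cfz α (n+1)) := by
      have hab' : ((a:ℝ) * (b:ℝ)) ≤ 0 := by exact_mod_cast hab.le
      nlinarith
    have h1 : (1:ℝ) ≤ |(a:ℝ)| := by
      have : (1:ℝ) ≤ ((|a| : ℤ) : ℝ) := by exact_mod_cast Int.one_le_abs ha0
      rwa [Int.cast_abs] at this
    have h2 : |cfz α n| ≤ |(a:ℝ) * cfz α n| := by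
      rw [abs_mul]
      exact le_mul_of_one_le_left (abs_nonneg _) h1
    have h3 := abs_le_abs_add_of_mul_nonneg habs
    rw [key]
    linarith

end Aux

lemma mem_arc_iff {β : ℝ} (hβ1 : β ≤ 1) (t : ℝ) :
    ((t : AddCircle (1:ℝ)) ∈ arc 0 β) ↔ Int.fract t < β := by
  constructor
  · rintro ⟨s, ⟨hs0, hsβ⟩, heq⟩
    have h0 : ((t - s : ℝ) : AddCircle (1:ℝ)) = 0 := by
      have heq' : (s : AddCircle (1:ℝ)) = (t : AddCircle (1:ℝ)) := heq
      rw [AddCircle.coe_sub, heq', sub_self]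
    obtain ⟨m, hm⟩ := (AddCircle.coe_eq_zero_iff _).1 h0
    have ht : t = s + m := by
      have : (m : ℝ) = t - s := by simpa [zsmul_eq_mul] using hm
      linarith
    rw [ht, Int.fract_add_intCast, Int.fract_eq_self.2 ⟨hs0, lt_of_lt_of_le hsβ hβ1⟩]
    exact hsβ
  · intro h
    refine ⟨Int.fract t, ⟨Int.fract_nonneg t, h⟩, ?_⟩
    have h0 : ((Int.fract t - t : ℝ) : AddCircle (1:ℝ)) = 0 := by
      refine (AddCircle.coe_eq_zero_iff _).2 ⟨-⌊t⌋, ?_⟩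
      rw [Int.fract, zsmul_eq_mul]
      push_cast
      ring
    have := AddCircle.coe_sub (p := (1:ℝ)) (Int.fract t) t
    rw [h0] at this
    exact (sub_eq_zero.1 this.symm)

lemma cfP_sum_le (hα : Irrational α) (n : ℕ) :
    cfP α (n+1) + cfP α (n+2) ≤ cfP α n := by
  have h1 := cfa_eq hα (n+1)
  have ha1 : (1:ℝ) ≤ cfa α (n+1) := by exact_mod_cast cfa_pos hα (n+1)
  have hx := gauss_pos hα (n+1)
  have hx2 := gauss_pos hα (n+2)
  have hinv : gaussIter α (n+1) * (gaussIter α (n+1))⁻¹ = 1 := mul_inv_cancel₀ hx.ne'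
  have hstep : gaussIter α (n+1) + gaussIter α (n+1) * gaussIter α (n+2) ≤ 1 := by
    have hkey : gaussIter α (n+1) * (1 + gaussIter α (n+2))
        ≤ gaussIter α (n+1) * (gaussIter α (n+1))⁻¹ :=
      mul_le_mul_of_nonneg_left (by rw [h1] at ha1; linarith) hx.le
    nlinarith [hkey, hinv]
  rw [show cfP α (n+2) = cfP α (n+1) * gaussIter α (n+2) from cfP_succ (n+1),
    show cfP α (n+1) = cfP α n * gaussIter α (n+1) from cfP_succ n]
  nlinarith [cfP_pos hα n]



/-- For even `n` and `x ∈ I_n⁰ = [0, |z_{n+1}|)`, the first forward return time of `x` to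
`I_n⁰` equals either `q_{n+2}` or `q_{n+2} + q_{n+1}`. -/
theorem statement14 (α : ℝ) (hα : Irrational α) (n : ℕ) (hn : Even n)
    (x : ℝ) (hx0 : 0 ≤ x) (hx1 : x < |cfz α (n + 1)|) :
    IsLeast {j : ℕ | 0 < j ∧
        ((x + (j : ℝ) * α : ℝ) : AddCircle (1 : ℝ)) ∈ arc 0 |cfz α (n + 1)|}
      (cfq α (n + 2)) ∨
    IsLeast {j : ℕ | 0 < j ∧
        ((x + (j : ℝ) * α : ℝ) : AddCircle (1 : ℝ)) ∈ arc 0 |cfz α (n + 1)|}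
      (cfq α (n + 2) + cfq α (n + 1)) := by
  have hodd : Odd (n + 1) := Even.add_one hn
  have heven2 : Even (n + 2) := by rcases hn with ⟨k, rfl⟩; exact ⟨k + 1, by ring⟩
  have hz1 : cfz α (n + 1) = -(cfP α (n + 1)) := by
    rw [cfz_formula hα, Odd.neg_one_pow hodd]; ring
  have hz2 : cfz α (n + 2) = cfP α (n + 2) := by
    rw [cfz_formula hα, Even.neg_one_pow heven2, one_mul]
  have hzn : |cfz α n| = cfP α n := by
    rw [cfz_formula hα, Even.neg_one_pow hn, one_mul, abs_of_pos (cfP_pos hα n)]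
  have hβ : |cfz α (n + 1)| = cfP α (n + 1) := by
    rw [hz1, abs_neg, abs_of_pos (cfP_pos hα (n + 1))]
  set β := cfP α (n + 1) with hβdef
  set γ := cfP α (n + 2) with hγdef
  have hβpos : 0 < β := cfP_pos hα (n + 1)
  have hγpos : 0 < γ := cfP_pos hα (n + 2)
  have hγβ : γ < β := by
    rw [hγdef, show cfP α (n + 2) = cfP α (n + 1) * gaussIter α (n + 2) from cfP_succ (n + 1)]
    nlinarith [gauss_lt_one hα (n + 2), gauss_pos hα (n + 2)]
  have hsum : β + γ ≤ cfP α n := cfP_sum_le hα n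
  have hPn1 : cfP α n < 1 := cfP_lt_one hα n
  have hβ1 : β < 1 := by linarith
  rw [hβ] at hx1 ⊢
  have hmem : ∀ j : ℕ, (((x + (j : ℝ) * α : ℝ) : AddCircle (1 : ℝ)) ∈ arc 0 β)
      ↔ Int.fract (x + (j : ℝ) * α) < β := fun j => mem_arc_iff hβ1.le _
  have hq2α : (cfq α (n + 2) : ℝ) * α = (cfp α (n + 2) : ℝ) + γ := by
    have := hz2; simp only [cfz] at this; linarith
  have hq1α : (cfq α (n + 1) : ℝ) * α = (cfp α (n + 1) : ℝ) - β := by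
    have := hz1; simp only [cfz] at this; linarith
  have hq2pos : 0 < cfq α (n + 2) := cfq_pos hα (n + 2)
  have hq1pos : 0 < cfq α (n + 1) := cfq_pos hα (n + 1)
  have hlow : ∀ j : ℕ, 0 < j → j < cfq α (n + 2) → ¬ Int.fract (x + (j : ℝ) * α) < β := by
    intro j hj0 hj hfr
    have hy0 : 0 ≤ Int.fract (x + (j : ℝ) * α) := Int.fract_nonneg _
    have hyx : (j : ℝ) * α - (⌊x + (j : ℝ) * α⌋ : ℤ) = Int.fract (x + (j : ℝ) * α) - x := by
      rw [Int.fract]; ring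
    have hba := best_approx hα (n + 1) j hj0 hj ⌊x + (j : ℝ) * α⌋
    rw [hyx, hβ] at hba
    have : |Int.fract (x + (j : ℝ) * α) - x| < β := by
      rw [abs_lt]; constructor <;> linarith
    linarith [hba, this]
  rcases lt_or_ge (x + γ) β with hcase | hcase
  · left
    constructor
    · refine ⟨hq2pos, (hmem _).2 ?_⟩
      have hrw : x + (cfq α (n + 2) : ℝ) * α = (x + γ) + (cfp α (n + 2) : ℝ) := by
        rw [hq2α]; ring
      rw [hrw, show ((cfp α (n+2) : ℝ)) = ((cfp α (n+2) : ℤ) : ℝ) by norm_cast,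
        Int.fract_add_intCast, Int.fract_eq_self.2 ⟨by linarith, by linarith⟩]
      linarith
    · intro j hjS
      obtain ⟨hj0, hjmem⟩ := hjS
      by_contra hcon
      push_neg at hcon
      exact hlow j hj0 hcon ((hmem j).1 hjmem)
  · right
    constructor
    · refine ⟨by omega, (hmem _).2 ?_⟩
      have hrw : x + ((cfq α (n + 2) + cfq α (n + 1) : ℕ) : ℝ) * α
          = (x + γ - β) + ((cfp α (n + 2) + cfp α (n + 1) : ℤ) : ℝ) := by
        push_cast
        linear_combination hq2α + hq1α
      rw [hrw, Int.fract_add_intCast, Int.fract_eq_self.2 ⟨by linarith, by linarith⟩]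
      linarith
    · rintro j ⟨hj0, hjmem⟩
      have hfr := (hmem j).1 hjmem
      by_contra hcon
      push_neg at hcon
      rcases lt_or_ge j (cfq α (n + 2)) with hlt | hge
      · exact hlow j hj0 hlt hfr
      · set i := j - cfq α (n + 2) with hidef
        have hji : j = i + cfq α (n + 2) := (Nat.sub_add_cancel hge).symm
        have hjr : (j : ℝ) = (i : ℝ) + (cfq α (n + 2) : ℝ) := by exact_mod_cast congrArg Nat.cast hji
        set y := Int.fract (x + (j : ℝ) * α) with hydef
        have hy0 : 0 ≤ y := Int.fract_nonneg _
        have hyβ : y < β := hfr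
        have h1 : y = x + (j : ℝ) * α - (⌊x + (j : ℝ) * α⌋ : ℤ) := by
          rw [hydef, Int.fract]
        have hkey : (i : ℝ) * α - ((⌊x + (j : ℝ) * α⌋ - cfp α (n + 2) : ℤ) : ℝ) = y - x - γ := by
          push_cast
          linear_combination (-1 : ℝ) * h1 - hq2α - α * hjr
        rcases Nat.eq_zero_or_pos i with hi0 | hipos
        · rw [hi0] at hkey
          simp only [Nat.cast_zero, zero_mul, zero_sub] at hkey
          have h2 : y - x - γ < 0 := by linarith
          have h3 : (-1 : ℝ) < y - x - γ := by linarith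
          rw [← hkey] at h2 h3
          have hk1 : -(⌊x + (j : ℝ) * α⌋ - cfp α (n + 2)) < 0 := by exact_mod_cast h2
          have hk2 : (-1 : ℤ) < -(⌊x + (j : ℝ) * α⌋ - cfp α (n + 2)) := by exact_mod_cast h3
          omega
        · have hiq : i < cfq α (n + 1) := by omega
          have hba := best_approx hα n i hipos hiq (⌊x + (j : ℝ) * α⌋ - cfp α (n + 2))
          rw [hkey, hzn] at hba
          have habs : |y - x - γ| < β + γ := by
            rw [abs_lt]; constructor <;> [linarith; linarith]
          linarith [hba, habs, hsum, abs_nonneg (y - x - γ), le_abs_self (y - x - γ)]
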